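/- Let g and h be binary morphisms A* → Σ*, and let g be marked. Let c and c' be elements of the equality set E(g,h) = {u : g(u) = h(u)} that are not prefix-comparable, and let u = c ∧ c' be their longest common prefix. Then g(u) = h(u)·z_h. -/

import Mathlib

/-- The two-letter alphabet `A = {a, b}`. -/
inductive Ltr : Type
  | a : Ltr
  | b : Ltr
  deriving DecidableEq

/-- Apply a morphism (given by the images of the letters) to a word. -/
def mapp {α σ : Type*} (g : α → List σ) (w : List α) : List σ :=
  (w.map g).flatten

/-- The `n`-th power `tⁿ` of a word `t`. -/
def npow {σ : Type*} (t : List σ) (n : ℕ) : List σ :=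
  (List.replicate n t).flatten

/-- A binary morphism is periodic if all images of letters are powers of a common word. -/
def Periodic {σ : Type*} (g : Ltr → List σ) : Prop :=
  ∃ t : List σ, ∀ x : Ltr, ∃ n : ℕ, g x = npow t n

/-- The equality set `E(g,h)`. -/
def EqSet {σ : Type*} (g h : Ltr → List σ) : Set (List Ltr) :=
  {u | mapp g u = mapp h u}

/-- `u` is a minimal element of `E(g,h)`: nonempty, in `E(g,h)`, and not a product of two
nonempty elements of `E(g,h)`. -/
def MinEl {σ : Type*} (g h : Ltr → List σ) (u : List Ltr) : Prop :=
  u ≠ [] ∧ u ∈ EqSet g h ∧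
    ∀ v w : List Ltr, v ≠ [] → w ≠ [] → v ∈ EqSet g h → w ∈ EqSet g h → u ≠ v ++ w

/-- The submonoid of the free monoid generated by a set `S` of words. -/
def gen {α : Type*} (S : Set (List α)) : Set (List α) :=
  {u | ∃ l : List (List α), (∀ v ∈ l, v ∈ S) ∧ u = l.flatten}

/-- A binary morphism is marked if the images of the two letters are nonempty and
begin with different letters. -/
def Marked {σ : Type*} (g : Ltr → List σ) : Prop :=
  g Ltr.a ≠ [] ∧ g Ltr.b ≠ [] ∧ (g Ltr.a).head? ≠ (g Ltr.b).head?

open Classical in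
/-- Longest common prefix of two words. -/
noncomputable def lcp {σ : Type*} : List σ → List σ → List σ
  | x :: xs, y :: ys => if x = y then x :: lcp xs ys else []
  | _, _ => []

/-- `z_h`: the longest common prefix of `h(ab)` and `h(ba)`. -/
noncomputable def zh {σ : Type*} (h : Ltr → List σ) : List σ :=
  lcp (h Ltr.a ++ h Ltr.b) (h Ltr.b ++ h Ltr.a)

/-- `z̄_h`: the longest common suffix of `h(ab)` and `h(ba)`. -/
noncomputable def zbar {σ : Type*} (h : Ltr → List σ) : List σ :=
  (lcp (h Ltr.a ++ h Ltr.b).reverse ((h Ltr.b ++ h Ltr.a).reverse)).reverse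

/-- Componentwise concatenation in `Δ* × Δ*`. -/
def pprod {α : Type*} (p q : List α × List α) : List α × List α :=
  (p.1 ++ q.1, p.2 ++ q.2)

/-- The coincidence set `I(g,h) = {(u,v) | g(u) = h(v)}`. -/
def CoinSet {α σ : Type*} (g h : α → List σ) : Set (List α × List α) :=
  {p | mapp g p.1 = mapp h p.2}

/-- Minimal elements of the coincidence set: elements other than `(ε,ε)` that are not
a product of two elements of `I(g,h) \ {(ε,ε)}`. -/
def MinCoin {α σ : Type*} (g h : α → List σ) (p : List α × List α) : Prop :=
  p ≠ ([], []) ∧ p ∈ CoinSet g h ∧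
    ¬ ∃ q r : List α × List α, q ≠ ([], []) ∧ r ≠ ([], []) ∧
      q ∈ CoinSet g h ∧ r ∈ CoinSet g h ∧ p = pprod q r

/-- `(e,f)` is a block of `(g,h)`: nonempty words with `z_h·g(e) = h(f)·z_h`, minimal
with this property. -/
def MinBlock {σ : Type*} (g h : Ltr → List σ) (e f : List Ltr) : Prop :=
  e ≠ [] ∧ f ≠ [] ∧ zh h ++ mapp g e = mapp h f ++ zh h ∧
    ∀ u v : List Ltr, u <+: e → v <+: f →
      zh h ++ mapp g u = mapp h v ++ zh h → (u = [] ∧ v = []) ∨ (u = e ∧ v = f)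

/-- `e` is a nonempty word with `z_h·g(e) = h(e)·z_h`, minimal with this property. -/
def MinEqBlock {σ : Type*} (g h : Ltr → List σ) (e : List Ltr) : Prop :=
  e ≠ [] ∧ zh h ++ mapp g e = mapp h e ++ zh h ∧
    ∀ e₁ : List Ltr, e₁ <+: e → zh h ++ mapp g e₁ = mapp h e₁ ++ zh h →
      e₁ = [] ∨ e₁ = e

/-- The binary morphism sending `a ↦ x` and `b ↦ y`. -/
def two {σ : Type*} (x y : List σ) : Ltr → List σ
  | Ltr.a => x
  | Ltr.b => y

/-- A counterexample: the minimal generating set of `E(g,h)` has at least two elements,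
`g` is marked, `h` is not marked, `|g(a)| > |h(a)|` and `|g(b)| < |h(b)|`. -/
def Counterexample {σ : Type*} (g h : Ltr → List σ) : Prop :=
  (∃ α β : List Ltr, MinEl g h α ∧ MinEl g h β ∧ α ≠ β) ∧
  Marked g ∧ ¬ Marked h ∧
  (h Ltr.a).length < (g Ltr.a).length ∧ (g Ltr.b).length < (h Ltr.b).length

section Stmt12Aux

variable {α σ : Type*}

theorem mapp_cons (g : α → List σ) (c : α) (w : List α) :
    mapp g (c :: w) = g c ++ mapp g w := by simp [mapp]

theorem mapp_append (g : α → List σ) (u v : List α) :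
    mapp g (u ++ v) = mapp g u ++ mapp g v := by simp [mapp]

theorem npow_add' (t : List σ) (m n : ℕ) : npow t (m + n) = npow t m ++ npow t n := by
  simp only [npow]
  rw [List.replicate_add, List.flatten_append]

theorem npow_prefix (t : List σ) {m n : ℕ} (h : m ≤ n) : npow t m <+: npow t n :=
  ⟨npow t (n - m), by rw [← npow_add', Nat.add_sub_cancel' h]⟩

theorem npow_comp (t : List σ) (m n : ℕ) :
    npow t m <+: npow t n ∨ npow t n <+: npow t m := by
  rcases le_total m n with h | h
  · exact Or.inl (npow_prefix t h)
  · exact Or.inr (npow_prefix t h)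

theorem mapp_pow (h : Ltr → List σ) (t : List σ) (hp : ∀ c, ∃ n, h c = npow t n) :
    ∀ w, ∃ n, mapp h w = npow t n
  | [] => ⟨0, rfl⟩
  | c :: w => by
    obtain ⟨m, hm⟩ := hp c
    obtain ⟨n, hn⟩ := mapp_pow h t hp w
    exact ⟨m + n, by rw [mapp_cons, hm, hn, npow_add']⟩

theorem per_comp (h : Ltr → List σ) (t : List σ) (hp : ∀ c, ∃ n, h c = npow t n)
    (x y : List Ltr) : mapp h x <+: mapp h y ∨ mapp h y <+: mapp h x := by
  obtain ⟨m, hm⟩ := mapp_pow h t hp x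
  obtain ⟨n, hn⟩ := mapp_pow h t hp y
  rw [hm, hn]; exact npow_comp t m n

theorem lcp_nil_left (t : List σ) : lcp [] t = [] := by cases t <;> rfl

theorem lcp_nil_right (s : List σ) : lcp s [] = [] := by cases s <;> rfl

theorem lcp_cons_eq (x : σ) (s t : List σ) : lcp (x :: s) (x :: t) = x :: lcp s t := by
  simp [lcp]

theorem lcp_cons_ne {x y : σ} (h : x ≠ y) (s t : List σ) : lcp (x :: s) (y :: t) = [] := by
  simp [lcp, h]

theorem lcp_append (p s t : List σ) : lcp (p ++ s) (p ++ t) = p ++ lcp s t := by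
  induction p with
  | nil => rfl
  | cons c p ih => simp [lcp_cons_eq, ih]

theorem lcp_comm (s : List σ) : ∀ t, lcp s t = lcp t s := by
  induction s with
  | nil => intro t; rw [lcp_nil_left, lcp_nil_right]
  | cons x s ih =>
    intro t
    cases t with
    | nil => rw [lcp_nil_left, lcp_nil_right]
    | cons y t =>
      by_cases h : x = y
      · subst h; rw [lcp_cons_eq, lcp_cons_eq, ih]
      · rw [lcp_cons_ne h, lcp_cons_ne (Ne.symm h)]

theorem lcp_stable (s : List σ) : ∀ t p q, ¬(s <+: t ∨ t <+: s) →
    lcp (s ++ p) (t ++ q) = lcp s t := by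
  induction s with
  | nil => intro t p q hn; exact absurd (Or.inl List.nil_prefix) hn
  | cons x s ih =>
    intro t p q hn
    cases t with
    | nil => exact absurd (Or.inr List.nil_prefix) hn
    | cons y t =>
      by_cases h : x = y
      · subst h
        have hn' : ¬(s <+: t ∨ t <+: s) := by
          intro hc; apply hn
          rcases hc with hc | hc
          · exact Or.inl (List.cons_prefix_cons.mpr ⟨rfl, hc⟩)
          · exact Or.inr (List.cons_prefix_cons.mpr ⟨rfl, hc⟩)
        simp only [List.cons_append, lcp_cons_eq]
        rw [ih t p q hn']
      · simp only [List.cons_append, lcp_cons_ne h, lcp_cons_ne h s t]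

theorem lcp_decomp (s : List σ) : ∀ t, ¬(s <+: t ∨ t <+: s) →
    ∃ x y, s = lcp s t ++ x ∧ t = lcp s t ++ y ∧ x ≠ [] ∧ y ≠ [] ∧ x.head? ≠ y.head? := by
  induction s with
  | nil => intro t hn; exact absurd (Or.inl List.nil_prefix) hn
  | cons c s ih =>
    intro t hn
    cases t with
    | nil => exact absurd (Or.inr List.nil_prefix) hn
    | cons d t =>
      by_cases h : c = d
      · subst h
        have hn' : ¬(s <+: t ∨ t <+: s) := by
          intro hc; apply hn
          rcases hc with hc | hc
          · exact Or.inl (List.cons_prefix_cons.mpr ⟨rfl, hc⟩)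
          · exact Or.inr (List.cons_prefix_cons.mpr ⟨rfl, hc⟩)
        obtain ⟨x, y, h1, h2, h3, h4, h5⟩ := ih t hn'
        exact ⟨x, y, by rw [lcp_cons_eq, List.cons_append, ← h1],
          by rw [lcp_cons_eq, List.cons_append, ← h2], h3, h4, h5⟩
      · exact ⟨c :: s, d :: t, by simp [lcp_cons_ne h], by simp [lcp_cons_ne h],
          by simp, by simp, by simpa using h⟩

theorem head?_of_prefix {s t : List σ} (h : s <+: t) (hs : s ≠ []) : t.head? = s.head? := by
  obtain ⟨r, rfl⟩ := h
  exact List.head?_append_of_ne_nil _ hs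

theorem per_of_nil_a (h : Ltr → List σ) (ha : h Ltr.a = []) :
    ∀ c, ∃ n, h c = npow (h Ltr.b) n := by
  intro c; cases c
  · exact ⟨0, by simp [ha, npow]⟩
  · exact ⟨1, by simp [npow]⟩

theorem per_of_nil_b (h : Ltr → List σ) (hb : h Ltr.b = []) :
    ∀ c, ∃ n, h c = npow (h Ltr.a) n := by
  intro c; cases c
  · exact ⟨1, by simp [npow]⟩
  · exact ⟨0, by simp [hb, npow]⟩

theorem per_of_eq (h : Ltr → List σ) (he : h Ltr.b = h Ltr.a) :
    ∀ c, ∃ n, h c = npow (h Ltr.a) n := by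
  intro c; cases c
  · exact ⟨1, by simp [npow]⟩
  · exact ⟨1, by simp [he, npow]⟩

theorem stmt12_main : ∀ (N : ℕ) (h : Ltr → List σ),
    (h Ltr.a).length + (h Ltr.b).length ≤ N →
    ∀ x y : List Ltr, ¬(mapp h x <+: mapp h y ∨ mapp h y <+: mapp h x) →
    lcp (mapp h x) (mapp h y) = mapp h (lcp x y) ++ zh h := by
  intro N
  induction N with
  | zero =>
    intro h hlen x y hn
    exfalso
    have ha : h Ltr.a = [] := List.length_eq_zero_iff.mp (by omega)
    have hb : h Ltr.b = [] := List.length_eq_zero_iff.mp (by omega)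
    exact hn (per_comp h [] (fun c => ⟨0, by cases c <;> simp [ha, hb, npow]⟩) x y)
  | succ N IHN =>
    intro h hlen
    have key : ∀ x₁ y₁ : List Ltr,
        ¬(mapp h (Ltr.a :: x₁) <+: mapp h (Ltr.b :: y₁) ∨
          mapp h (Ltr.b :: y₁) <+: mapp h (Ltr.a :: x₁)) →
        lcp (mapp h (Ltr.a :: x₁)) (mapp h (Ltr.b :: y₁)) = zh h := by
      intro x₁ y₁ hn
      by_cases ha0 : h Ltr.a = []
      · exact absurd (per_comp h (h Ltr.b) (per_of_nil_a h ha0) _ _) hn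
      by_cases hb0 : h Ltr.b = []
      · exact absurd (per_comp h (h Ltr.a) (per_of_nil_b h hb0) _ _) hn
      by_cases hab : (h Ltr.a <+: h Ltr.b) ∨ (h Ltr.b <+: h Ltr.a)
      · rcases hab with hab | hab
        · -- h a is a prefix of h b
          obtain ⟨z, hz⟩ := hab
          by_cases hz0 : z = []
          · subst hz0
            exact absurd (per_comp h (h Ltr.a)
              (per_of_eq h (by simpa using hz.symm)) _ _) hn
          · set h' : Ltr → List σ := two (h Ltr.a) z with hh'
            set τ : Ltr → List Ltr := two [Ltr.a] [Ltr.a, Ltr.b] with hτ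
            have hcw : ∀ w, mapp h' (mapp τ w) = mapp h w := by
              intro w; induction w with
              | nil => rfl
              | cons c w ihw =>
                cases c <;>
                  simp [mapp_cons, mapp_append, hh', hτ, two, ← ihw, ← hz]
            have hhead : ∀ w, mapp τ w = [] ∨ ∃ r, mapp τ w = Ltr.a :: r := by
              intro w; cases w with
              | nil => exact Or.inl rfl
              | cons c w =>
                cases c
                · exact Or.inr ⟨mapp τ w, by simp [hτ, two, mapp_cons]⟩
                · exact Or.inr ⟨Ltr.b :: mapp τ w, by simp [hτ, two, mapp_cons]⟩
            have e1 : mapp τ (Ltr.a :: x₁) = Ltr.a :: mapp τ x₁ := by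
              simp [hτ, two, mapp_cons]
            have e2 : mapp τ (Ltr.b :: y₁) = Ltr.a :: Ltr.b :: mapp τ y₁ := by
              simp [hτ, two, mapp_cons]
            have hlcp : lcp (mapp τ (Ltr.a :: x₁)) (mapp τ (Ltr.b :: y₁)) = [Ltr.a] := by
              rw [e1, e2, lcp_cons_eq]
              rcases hhead x₁ with h0 | ⟨r, hr⟩
              · rw [h0, lcp_nil_left]
              · rw [hr, lcp_cons_ne (fun hc => Ltr.noConfusion hc)]
            have hlen' : (h' Ltr.a).length + (h' Ltr.b).length ≤ N := by
              have h1 : (h Ltr.a).length + z.length = (h Ltr.b).length := by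
                rw [← hz]; simp
              have hpos : 0 < (h Ltr.a).length := List.length_pos_iff.mpr ha0
              simp only [hh', two]
              omega
            have hn' : ¬(mapp h' (mapp τ (Ltr.a :: x₁)) <+: mapp h' (mapp τ (Ltr.b :: y₁)) ∨
                mapp h' (mapp τ (Ltr.b :: y₁)) <+: mapp h' (mapp τ (Ltr.a :: x₁))) := by
              rw [hcw, hcw]; exact hn
            have hmain := IHN h' hlen' _ _ hn'
            rw [hcw, hcw, hlcp] at hmain
            rw [hmain]
            have e0 : mapp h' [Ltr.a] = h Ltr.a := by simp [mapp, hh', two]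
            have ez : zh h' = lcp (h Ltr.a ++ z) (z ++ h Ltr.a) := by
              simp only [zh, hh', two]
            have hzh : zh h = h Ltr.a ++ zh h' := by
              rw [ez]
              simp only [zh]
              rw [← hz, List.append_assoc, ← lcp_append]
            rw [e0, hzh]
        · -- h b is a prefix of h a
          obtain ⟨z, hz⟩ := hab
          by_cases hz0 : z = []
          · subst hz0
            exact absurd (per_comp h (h Ltr.a)
              (per_of_eq h (by simpa using hz)) _ _) hn
          · set h' : Ltr → List σ := two z (h Ltr.b) with hh'
            set τ : Ltr → List Ltr := two [Ltr.b, Ltr.a] [Ltr.b] with hτ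
            have hcw : ∀ w, mapp h' (mapp τ w) = mapp h w := by
              intro w; induction w with
              | nil => rfl
              | cons c w ihw =>
                cases c <;>
                  simp [mapp_cons, mapp_append, hh', hτ, two, ← ihw, ← hz]
            have hhead : ∀ w, mapp τ w = [] ∨ ∃ r, mapp τ w = Ltr.b :: r := by
              intro w; cases w with
              | nil => exact Or.inl rfl
              | cons c w =>
                cases c
                · exact Or.inr ⟨Ltr.a :: mapp τ w, by simp [hτ, two, mapp_cons]⟩
                · exact Or.inr ⟨mapp τ w, by simp [hτ, two, mapp_cons]⟩
            have e1 : mapp τ (Ltr.a :: x₁) = Ltr.b :: Ltr.a :: mapp τ x₁ := by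
              simp [hτ, two, mapp_cons]
            have e2 : mapp τ (Ltr.b :: y₁) = Ltr.b :: mapp τ y₁ := by
              simp [hτ, two, mapp_cons]
            have hlcp : lcp (mapp τ (Ltr.a :: x₁)) (mapp τ (Ltr.b :: y₁)) = [Ltr.b] := by
              rw [e1, e2, lcp_cons_eq]
              rcases hhead y₁ with h0 | ⟨r, hr⟩
              · rw [h0, lcp_nil_right]
              · rw [hr, lcp_cons_ne (fun hc => Ltr.noConfusion hc)]
            have hlen' : (h' Ltr.a).length + (h' Ltr.b).length ≤ N := by
              have h1 : (h Ltr.b).length + z.length = (h Ltr.a).length := by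
                rw [← hz]; simp
              have hpos : 0 < (h Ltr.b).length := List.length_pos_iff.mpr hb0
              simp only [hh', two]
              omega
            have hn' : ¬(mapp h' (mapp τ (Ltr.a :: x₁)) <+: mapp h' (mapp τ (Ltr.b :: y₁)) ∨
                mapp h' (mapp τ (Ltr.b :: y₁)) <+: mapp h' (mapp τ (Ltr.a :: x₁))) := by
              rw [hcw, hcw]; exact hn
            have hmain := IHN h' hlen' _ _ hn'
            rw [hcw, hcw, hlcp] at hmain
            rw [hmain]
            have e0 : mapp h' [Ltr.b] = h Ltr.b := by simp [mapp, hh', two]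
            have ez : zh h' = lcp (z ++ h Ltr.b) (h Ltr.b ++ z) := by
              simp only [zh, hh', two]
            have hzh : zh h = h Ltr.b ++ zh h' := by
              rw [ez]
              simp only [zh]
              rw [← hz, List.append_assoc, ← lcp_append]
            rw [e0, hzh]
      · -- h a and h b are not prefix-comparable
        rw [mapp_cons, mapp_cons, lcp_stable _ _ _ _ hab]
        simp only [zh]
        rw [lcp_stable _ _ _ _ hab]
    have inner : ∀ M (x y : List Ltr), x.length + y.length ≤ M →
        ¬(mapp h x <+: mapp h y ∨ mapp h y <+: mapp h x) →
        lcp (mapp h x) (mapp h y) = mapp h (lcp x y) ++ zh h := by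
      intro M
      induction M with
      | zero =>
        intro x y hxy hn
        have hx : x = [] := List.length_eq_zero_iff.mp (by omega)
        rw [hx] at hn
        exact absurd (Or.inl ⟨mapp h y, rfl⟩) hn
      | succ M IHM =>
        intro x y hxy hn
        match x, y with
        | [], y => exact absurd (Or.inl ⟨mapp h y, rfl⟩) hn
        | c :: x₁, [] => exact absurd (Or.inr ⟨mapp h (c :: x₁), rfl⟩) hn
        | c :: x₁, d :: y₁ =>
          by_cases hcd : c = d
          · subst hcd
            have hn' : ¬(mapp h x₁ <+: mapp h y₁ ∨ mapp h y₁ <+: mapp h x₁) := by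
              intro hc; apply hn
              rw [mapp_cons, mapp_cons]
              rcases hc with hc | hc
              · exact Or.inl ((List.prefix_append_right_inj _).mpr hc)
              · exact Or.inr ((List.prefix_append_right_inj _).mpr hc)
            have hrec := IHM x₁ y₁ (by simp at hxy ⊢; omega) hn'
            rw [mapp_cons, mapp_cons, lcp_append, hrec, lcp_cons_eq, mapp_cons]
            simp
          · rw [lcp_cons_ne hcd]
            cases c <;> cases d
            · exact absurd rfl hcd
            · exact key x₁ y₁ hn
            · rw [lcp_comm]
              exact key y₁ x₁ (fun hc => hn hc.symm)
            · exact absurd rfl hcd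
    intro x y
    exact inner (x.length + y.length) x y le_rfl

end Stmt12Aux

/-- If `c, c' ∈ E(g,h)` are not prefix-comparable, then
`g(c ∧ c') = h(c ∧ c')·z_h` (`g` marked). -/
theorem stmt_12 {σ : Type*} (g h : Ltr → List σ) (hg : Marked g)
    (c c' : List Ltr)
    (h1 : c ∈ EqSet g h) (h2 : c' ∈ EqSet g h)
    (hinc : ¬ (c <+: c' ∨ c' <+: c)) :
    mapp g (lcp c c') = mapp h (lcp c c') ++ zh h := by
  obtain ⟨x, y, hcx, hcy, hx0, hy0, hhead⟩ := lcp_decomp c c' hinc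
  obtain ⟨hga, hgb, hgh⟩ := hg
  have gl : ∀ c, g c ≠ [] := fun c => by cases c; exacts [hga, hgb]
  have h1' : mapp g c = mapp h c := h1
  have h2' : mapp g c' = mapp h c' := h2
  obtain ⟨cx, x', rfl⟩ := List.exists_cons_of_ne_nil hx0
  obtain ⟨cy, y', rfl⟩ := List.exists_cons_of_ne_nil hy0
  have hcxy : cx ≠ cy := by simpa using hhead
  set u := lcp c c' with hu
  set x := cx :: x' with hx
  set y := cy :: y' with hy
  have hne : (g cx).head? ≠ (g cy).head? := by
    cases cx <;> cases cy
    · exact absurd rfl hcxy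
    · exact hgh
    · exact Ne.symm hgh
    · exact absurd rfl hcxy
  have e1 : mapp g u ++ mapp g x = mapp h u ++ mapp h x := by
    rw [← mapp_append, ← mapp_append, ← hcx]; exact h1'
  have e2 : mapp g u ++ mapp g y = mapp h u ++ mapp h y := by
    rw [← mapp_append, ← mapp_append, ← hcy]; exact h2'
  have hgxh : (mapp g x).head? = (g cx).head? := by
    rw [hx, mapp_cons]; exact List.head?_append_of_ne_nil _ (gl cx)
  have hgyh : (mapp g y).head? = (g cy).head? := by
    rw [hy, mapp_cons]; exact List.head?_append_of_ne_nil _ (gl cy)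
  have hgx0 : mapp g x ≠ [] := by
    rw [hx, mapp_cons]
    exact fun hq => (gl cx) (List.append_eq_nil_iff.mp hq).1
  have hgy0 : mapp g y ≠ [] := by
    rw [hy, mapp_cons]
    exact fun hq => (gl cy) (List.append_eq_nil_iff.mp hq).1
  -- `g u` and `h u` are prefix-comparable (both are prefixes of `g c = h c`)
  have hcomp : mapp g u <+: mapp h u ∨ mapp h u <+: mapp g u := by
    apply List.prefix_or_prefix_of_prefix (l₃ := mapp g c)
    · exact ⟨mapp g x, by rw [← mapp_append, ← hcx]⟩
    · rw [h1']
      exact ⟨mapp h x, by rw [← mapp_append, ← hcx]⟩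
  obtain ⟨w, hw, hwx, hwy⟩ : ∃ w, mapp g u = mapp h u ++ w ∧
      mapp h x = w ++ mapp g x ∧ mapp h y = w ++ mapp g y := by
    rcases hcomp with ⟨w, hw⟩ | ⟨w, hw⟩
    · -- g u ++ w = h u ; then w = []
      have ex : mapp g x = w ++ mapp h x := by
        apply List.append_cancel_left (as := mapp g u)
        rw [e1, ← hw]; simp
      have ey : mapp g y = w ++ mapp h y := by
        apply List.append_cancel_left (as := mapp g u)
        rw [e2, ← hw]; simp
      have hw0 : w = [] := by
        by_contra hw0
        apply hne
        rw [← hgxh, ← hgyh, ex, ey, List.head?_append_of_ne_nil _ hw0,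
          List.head?_append_of_ne_nil _ hw0]
      subst hw0
      refine ⟨[], by simpa using hw, by simpa using ex.symm, by simpa using ey.symm⟩
    · refine ⟨w, hw.symm, ?_, ?_⟩
      · apply List.append_cancel_left (as := mapp h u)
        rw [← e1, ← hw]; simp
      · apply List.append_cancel_left (as := mapp h u)
        rw [← e2, ← hw]; simp
  -- `h x` and `h y` are not prefix-comparable
  have hnc : ¬(mapp h x <+: mapp h y ∨ mapp h y <+: mapp h x) := by
    rintro (hc | hc)
    · rw [hwx, hwy] at hc
      have hpre : mapp g x <+: mapp g y := (List.prefix_append_right_inj w).mp hc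
      have := head?_of_prefix hpre hgx0
      exact hne (by rw [← hgxh, ← hgyh, this])
    · rw [hwx, hwy] at hc
      have hpre : mapp g y <+: mapp g x := (List.prefix_append_right_inj w).mp hc
      have := head?_of_prefix hpre hgy0
      exact (Ne.symm hne) (by rw [← hgxh, ← hgyh, this])
  -- `lcp (h x) (h y) = w`
  have hlcphxy : lcp (mapp h x) (mapp h y) = w := by
    rw [hwx, hwy, lcp_append]
    obtain ⟨e, r, her⟩ := List.exists_cons_of_ne_nil (gl cx)
    obtain ⟨f, s, hfs⟩ := List.exists_cons_of_ne_nil (gl cy)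
    have hef : e ≠ f := by
      intro hh; exact hne (by simp [her, hfs, hh])
    rw [hx, hy, mapp_cons, mapp_cons, her, hfs, List.cons_append, List.cons_append,
      lcp_cons_ne hef, List.append_nil]
  have hzz := stmt12_main ((h Ltr.a).length + (h Ltr.b).length) h le_rfl x y hnc
  rw [hlcphxy, hx, hy, lcp_cons_ne hcxy] at hzz
  -- hzz : w = mapp h [] ++ zh h
  have hwz : w = zh h := by simpa [mapp] using hzz
  rw [hw, hwz]
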